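/- Let X be a Hilbert space, Ψ : X → (−∞,∞] and Ψ_n : X → (−∞,∞] (n ∈ ℕ) proper l.s.c. convex functions such that Ψ_n → Ψ in the sense of Mosco. Suppose [z_n, z_n*] ∈ ∂Ψ_n for each n, z_n → z strongly in X, and z_n* → z* weakly in X. Then [z, z*] ∈ ∂Ψ and Ψ_n(z_n) → Ψ(z) as n → ∞. -/

import Mathlib

open Filter

/-- Fact (Mosco convergence and subdifferentials): if proper l.s.c. convex
functions `Ψₙ` Mosco-converge to `Ψ` on a Hilbert space `X`,
`[zₙ, zₙ*] ∈ ∂Ψₙ`, `zₙ → z` strongly, and `zₙ* ⇀ z*` weakly, then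
`[z, z*] ∈ ∂Ψ` and `Ψₙ(zₙ) → Ψ(z)`. -/
theorem mosco_subdifferential_limit
    {X : Type*} [NormedAddCommGroup X] [InnerProductSpace ℝ X] [CompleteSpace X]
    (Ψ : X → EReal) (Ψn : ℕ → X → EReal)
    (hproper : ∃ z, Ψ z ≠ ⊤) (hne_bot : ∀ z, Ψ z ≠ ⊥)
    (hproper_n : ∀ n, ∃ z, Ψn n z ≠ ⊤) (hne_bot_n : ∀ n z, Ψn n z ≠ ⊥)
    (hlsc : LowerSemicontinuous Ψ) (hlsc_n : ∀ n, LowerSemicontinuous (Ψn n))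
    (hconv : ∀ x y : X, ∀ t : ℝ, 0 ≤ t → t ≤ 1 →
      Ψ (t • x + (1 - t) • y) ≤ (t : EReal) * Ψ x + ((1 - t : ℝ) : EReal) * Ψ y)
    (hconv_n : ∀ n, ∀ x y : X, ∀ t : ℝ, 0 ≤ t → t ≤ 1 →
      Ψn n (t • x + (1 - t) • y) ≤
        (t : EReal) * Ψn n x + ((1 - t : ℝ) : EReal) * Ψn n y)
    -- Mosco convergence, part (i): weak lower-bound inequality
    (hMosco1 : ∀ (w : X) (wn : ℕ → X),
      (∀ v : X, Tendsto (fun n => (inner ℝ (wn n) v : ℝ)) atTop (nhds (inner ℝ w v))) →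
        Ψ w ≤ atTop.liminf (fun n => Ψn n (wn n)))
    -- Mosco convergence, part (ii): strong recovery sequences
    (hMosco2 : ∀ w : X, Ψ w ≠ ⊤ → ∃ wn : ℕ → X,
      Tendsto wn atTop (nhds w) ∧ Tendsto (fun n => Ψn n (wn n)) atTop (nhds (Ψ w)))
    (z zstar : X) (zn znstar : ℕ → X)
    (hsub : ∀ n, ∀ v : X,
      Ψn n (zn n) ≤ (((inner ℝ (znstar n) (v - zn n) : ℝ)) : EReal) + Ψn n v)
    (hzn : Tendsto zn atTop (nhds z))
    (hznstar : ∀ v : X,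
      Tendsto (fun n => (inner ℝ (znstar n) v : ℝ)) atTop (nhds (inner ℝ zstar v))) :
    (∀ v : X, Ψ z ≤ (((inner ℝ zstar (v - z) : ℝ)) : EReal) + Ψ v) ∧
      Tendsto (fun n => Ψn n (zn n)) atTop (nhds (Ψ z)) := by
  -- zₙ* is bounded (Banach–Steinhaus)
  obtain ⟨M, hM⟩ : ∃ M : ℝ, ∀ n, ‖znstar n‖ ≤ M := by
    obtain ⟨C, hC⟩ := banach_steinhaus (g := fun n => innerSL ℝ (znstar n)) (fun v => by
      obtain ⟨C, hC⟩ := ((hznstar v).norm).bddAbove_range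
      exact ⟨C, fun n => hC (Set.mem_range_self n)⟩)
    exact ⟨C, fun n => by simpa [innerSL_apply_norm] using hC n⟩
  have hM0 : 0 ≤ M := le_trans (norm_nonneg _) (hM 0)
  -- auxiliary: for uₙ → u strongly, ⟪zₙ*, uₙ⟫ → ⟪z*, u⟫
  have key_inner : ∀ (u : X) (un : ℕ → X), Tendsto un atTop (nhds u) →
      Tendsto (fun n => (inner ℝ (znstar n) (un n) : ℝ)) atTop (nhds (inner ℝ zstar u)) := by
    intro u un hun
    have h1 : Tendsto (fun n => (inner ℝ (znstar n) (un n - u) : ℝ)) atTop (nhds 0) := by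
      refine squeeze_zero_norm (a := fun n => M * ‖un n - u‖) (fun n => ?_) ?_
      · exact le_trans (norm_inner_le_norm _ _)
          (mul_le_mul_of_nonneg_right (hM n) (norm_nonneg _))
      · have := (tendsto_iff_norm_sub_tendsto_zero.mp hun)
        simpa using (this.const_mul M)
    have h2 := (hznstar u).add h1
    have h3 := h2.congr (fun n => by rw [inner_sub_right])
    simpa using h3
  -- strong convergence zₙ → z gives weak convergence
  have hzn_weak : ∀ v : X, Tendsto (fun n => (inner ℝ (zn n) v : ℝ)) atTop (nhds (inner ℝ z v)) := by
    intro v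
    exact hzn.inner tendsto_const_nhds
  have hlower : Ψ z ≤ atTop.liminf (fun n => Ψn n (zn n)) := hMosco1 z zn hzn_weak
  -- upper bound on limsup, for every v
  have hupper : ∀ v : X, atTop.limsup (fun n => Ψn n (zn n)) ≤
      (((inner ℝ zstar (v - z) : ℝ)) : EReal) + Ψ v := by
    intro v
    rcases eq_or_ne (Ψ v) ⊤ with hv | hv
    · rw [hv, EReal.coe_add_top]; exact le_top
    obtain ⟨wn, hwn, hwnΨ⟩ := hMosco2 v hv
    -- Ψ v is a real number
    obtain ⟨r, hr⟩ : ∃ r : ℝ, Ψ v = (r : EReal) := by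
      lift Ψ v to ℝ using ⟨hv, hne_bot v⟩ with r
      exact ⟨r, rfl⟩
    have hinner : Tendsto (fun n => (inner ℝ (znstar n) (wn n - zn n) : ℝ)) atTop
        (nhds (inner ℝ zstar (v - z))) := by
      have := key_inner (v - z) (fun n => wn n - zn n) (hwn.sub hzn)
      exact this
    have hbound : Tendsto (fun n => (((inner ℝ (znstar n) (wn n - zn n) : ℝ)) : EReal) + Ψn n (wn n))
        atTop (nhds ((((inner ℝ zstar (v - z) : ℝ)) : EReal) + Ψ v)) := by
      have hcoe : Tendsto (fun n => (((inner ℝ (znstar n) (wn n - zn n) : ℝ)) : EReal)) atTop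
          (nhds (((inner ℝ zstar (v - z) : ℝ) : EReal))) :=
        (continuous_coe_real_ereal.tendsto _).comp hinner
      have hpair : Tendsto (fun n => ((((inner ℝ (znstar n) (wn n - zn n) : ℝ)) : EReal),
          Ψn n (wn n))) atTop (nhds ((((inner ℝ zstar (v - z) : ℝ)) : EReal), Ψ v)) :=
        hcoe.prodMk_nhds hwnΨ
      exact (EReal.continuousAt_add (by simp) (by simp [hr])).tendsto.comp hpair
    calc atTop.limsup (fun n => Ψn n (zn n))
        ≤ atTop.limsup (fun n => (((inner ℝ (znstar n) (wn n - zn n) : ℝ)) : EReal) + Ψn n (wn n)) :=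
          limsup_le_limsup (Eventually.of_forall (fun n => hsub n (wn n)))
      _ = (((inner ℝ zstar (v - z) : ℝ)) : EReal) + Ψ v := hbound.limsup_eq
  -- the subdifferential inequality for Ψ
  have hsubΨ : ∀ v : X, Ψ z ≤ (((inner ℝ zstar (v - z) : ℝ)) : EReal) + Ψ v := fun v =>
    le_trans hlower (le_trans liminf_le_limsup (hupper v))
  refine ⟨hsubΨ, ?_⟩
  -- Ψ z is not ⊤
  have hztop : Ψ z ≠ ⊤ := by
    obtain ⟨v0, hv0⟩ := hproper
    have h := hsubΨ v0
    lift Ψ v0 to ℝ using ⟨hv0, hne_bot v0⟩ with r hr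
    have h' : Ψ z ≤ ((inner ℝ zstar (v0 - z) + r : ℝ) : EReal) := by push_cast; exact h
    exact ne_top_of_le_ne_top (EReal.coe_ne_top _) h'
  have hup : atTop.limsup (fun n => Ψn n (zn n)) ≤ Ψ z := by
    have := hupper z
    simpa using this
  exact tendsto_of_le_liminf_of_limsup_le hlower hup
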